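/- For i.i.d. real random variables x_1,…,x_k on a finite probability space, E[max_{i∈[n]} x_i | tb(x) ∈ [n]] = E[max_{i∈[k]} x_i | tb(x) ∈ [n]] = E[max_{i∈[k]} x_i], where n ≤ k and tb(x) is the uniformly-tie-broken argmax. -/

import Mathlib

open scoped Classical
open Finset

/-- The conditional probability, given the sample `v`, that the uniformly-tie-broken
argmax `tb(v)` lies among the first `n` coordinates. -/
noncomputable def tbFirst (k n : ℕ) (v : Fin k → ℝ) : ℝ :=
  ∑ i ∈ (univ : Finset (Fin k)).filter (fun i : Fin k => i.val < n),
    (if ∀ j, v j ≤ v i then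
        1 / (((univ : Finset (Fin k)).filter (fun j => v j = v i)).card : ℝ)
      else 0)

noncomputable def gfun {k : ℕ} (i : Fin k) (v : Fin k → ℝ) : ℝ :=
  if ∀ j, v j ≤ v i then
    1 / (((univ : Finset (Fin k)).filter (fun j => v j = v i)).card : ℝ)
  else 0

lemma tbFirst_eq (k n : ℕ) (v : Fin k → ℝ) :
    tbFirst k n v = ∑ i ∈ (univ : Finset (Fin k)).filter (fun i : Fin k => i.val < n),
      gfun i v := rfl

lemma gfun_nonneg {k : ℕ} (i : Fin k) (v : Fin k → ℝ) : 0 ≤ gfun i v := by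
  unfold gfun; split <;> positivity

lemma sum_gfun {k : ℕ} (hk : 0 < k) (v : Fin k → ℝ) : ∑ i, gfun i v = 1 := by
  have : Nonempty (Fin k) := ⟨⟨0, hk⟩⟩
  set A : Finset (Fin k) := univ.filter (fun j => ∀ l, v l ≤ v j) with hA
  have hAne : A.Nonempty := by
    obtain ⟨i, hi⟩ := Finite.exists_max v
    exact ⟨i, by simp [hA, hi]⟩
  have hfilt : ∀ i ∈ A, (univ.filter (fun j => v j = v i)) = A := by
    intro i hi
    simp only [hA, mem_filter, mem_univ, true_and] at hi ⊢
    ext j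
    simp only [mem_filter, mem_univ, true_and]
    constructor
    · intro h l; rw [h]; exact hi l
    · intro h; exact le_antisymm (hi j) (h i)
  rw [← Finset.sum_filter_add_sum_filter_not univ (fun i => ∀ l, v l ≤ v i)]
  have h2 : ∑ i ∈ univ.filter (fun i => ¬ ∀ l, v l ≤ v i), gfun i v = 0 := by
    apply Finset.sum_eq_zero
    intro i hi
    simp only [mem_filter] at hi
    simp [gfun, hi.2]
  rw [h2, add_zero]
  have h1 : ∀ i ∈ A, gfun i v = 1 / (A.card : ℝ) := by
    intro i hi
    have hmax : ∀ l, v l ≤ v i := by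
      simpa [hA] using hi
    simp [gfun, hmax, hfilt i hi]
  rw [← hA, Finset.sum_congr rfl h1, Finset.sum_const, nsmul_eq_mul]
  have : (A.card : ℝ) ≠ 0 := by
    have := Finset.card_pos.mpr hAne
    positivity
  field_simp

lemma gfun_comp {k : ℕ} (σ : Equiv.Perm (Fin k)) (i : Fin k) (v : Fin k → ℝ) :
    gfun i (v ∘ σ) = gfun (σ i) v := by
  unfold gfun
  have hiff : (∀ j, (v ∘ σ) j ≤ (v ∘ σ) i) ↔ (∀ j, v j ≤ v (σ i)) := by
    constructor
    · intro h j; simpa using h (σ.symm j)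
    · intro h j; exact h (σ j)
  have hcard : (univ.filter (fun j => (v ∘ σ) j = (v ∘ σ) i)).card
      = (univ.filter (fun j => v j = v (σ i))).card := by
    apply Finset.card_bij (fun j _ => σ j)
    · intro j hj; simp only [mem_filter, mem_univ, true_and, Function.comp] at hj ⊢; exact hj
    · intro a ha b hb h; exact σ.injective h
    · intro b hb
      refine ⟨σ.symm b, ?_, by simp⟩
      simp only [mem_filter, mem_univ, true_and, Function.comp, Equiv.apply_symm_apply] at hb ⊢
      exact hb
  rw [hcard]
  simp only [hiff]

lemma sum_comp_perm {k : ℕ} (S : Finset ℝ) (σ : Equiv.Perm (Fin k))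
    (F : (Fin k → ℝ) → ℝ) :
    ∑ v ∈ Fintype.piFinset (fun _ : Fin k => S), F (v ∘ σ)
      = ∑ v ∈ Fintype.piFinset (fun _ : Fin k => S), F v := by
  apply Finset.sum_nbij' (fun v => v ∘ σ) (fun v => v ∘ σ.symm)
  · intro v hv; simp only [Fintype.mem_piFinset] at hv ⊢; intro j; exact hv _
  · intro v hv; simp only [Fintype.mem_piFinset] at hv ⊢; intro j; exact hv _
  · intro v hv; funext j; simp
  · intro v hv; funext j; simp
  · intro v hv; rfl

lemma T_const {k : ℕ} (S : Finset ℝ) (q : ℝ → ℝ)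
    (M : (Fin k → ℝ) → ℝ) (hM : ∀ σ : Equiv.Perm (Fin k), ∀ v, M (v ∘ σ) = M v)
    (i i' : Fin k) :
    ∑ v ∈ Fintype.piFinset (fun _ : Fin k => S), (∏ j, q (v j)) * gfun i v * M v
      = ∑ v ∈ Fintype.piFinset (fun _ : Fin k => S), (∏ j, q (v j)) * gfun i' v * M v := by
  set σ : Equiv.Perm (Fin k) := Equiv.swap i i' with hσ
  have := sum_comp_perm S σ (fun v => (∏ j, q (v j)) * gfun i v * M v)
  rw [← this]
  apply Finset.sum_congr rfl
  intro v hv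
  have h1 : ∏ j, q ((v ∘ σ) j) = ∏ j, q (v j) := Equiv.prod_comp σ (fun j => q (v j))
  rw [h1, gfun_comp, hM, hσ, Equiv.swap_apply_left]

lemma sum_tb_mul {k : ℕ} (hk : 0 < k) (S : Finset ℝ) (q : ℝ → ℝ)
    (M : (Fin k → ℝ) → ℝ) (hM : ∀ σ : Equiv.Perm (Fin k), ∀ v, M (v ∘ σ) = M v)
    (s : Finset (Fin k)) :
    (k : ℝ) * ∑ v ∈ Fintype.piFinset (fun _ : Fin k => S),
        (∏ j, q (v j)) * (∑ i ∈ s, gfun i v) * M v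
      = (s.card : ℝ) * ∑ v ∈ Fintype.piFinset (fun _ : Fin k => S),
          (∏ j, q (v j)) * M v := by
  set T : Fin k → ℝ := fun i =>
    ∑ v ∈ Fintype.piFinset (fun _ : Fin k => S), (∏ j, q (v j)) * gfun i v * M v with hT
  have i0 : Fin k := ⟨0, hk⟩
  have hTconst : ∀ i, T i = T i0 := fun i => T_const S q M hM i i0
  have hsplit : ∀ (t : Finset (Fin k)),
      ∑ v ∈ Fintype.piFinset (fun _ : Fin k => S),
        (∏ j, q (v j)) * (∑ i ∈ t, gfun i v) * M v = ∑ i ∈ t, T i := by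
    intro t
    have : ∀ v : Fin k → ℝ, (∏ j, q (v j)) * (∑ i ∈ t, gfun i v) * M v
        = ∑ i ∈ t, (∏ j, q (v j)) * gfun i v * M v := by
      intro v; rw [Finset.mul_sum, Finset.sum_mul]
    rw [Finset.sum_congr rfl (fun v _ => this v), Finset.sum_comm]
  have htotal : ∑ i, T i = ∑ v ∈ Fintype.piFinset (fun _ : Fin k => S),
      (∏ j, q (v j)) * M v := by
    rw [← hsplit univ]
    apply Finset.sum_congr rfl
    intro v _
    rw [sum_gfun hk, mul_one]
  have hk' : ∑ i : Fin k, T i = (k : ℝ) * T i0 := by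
    rw [Finset.sum_congr rfl (fun i _ => hTconst i), Finset.sum_const, nsmul_eq_mul]
    simp
  have hs' : ∑ i ∈ s, T i = (s.card : ℝ) * T i0 := by
    rw [Finset.sum_congr rfl (fun i _ => hTconst i), Finset.sum_const, nsmul_eq_mul]
  rw [hsplit s, hs', ← htotal, hk']
  ring

lemma sup'_comp_perm {k : ℕ} (hne : (univ : Finset (Fin k)).Nonempty)
    (σ : Equiv.Perm (Fin k)) (v : Fin k → ℝ) :
    (univ : Finset (Fin k)).sup' hne (v ∘ σ) = (univ : Finset (Fin k)).sup' hne v := by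
  apply le_antisymm
  · exact Finset.sup'_le _ _ fun j _ => Finset.le_sup' v (mem_univ (σ j))
  · refine Finset.sup'_le _ _ fun j _ => ?_
    have := Finset.le_sup' (v ∘ σ) (mem_univ (σ.symm j))
    simp only [Function.comp_apply, Equiv.apply_symm_apply] at this; exact this

lemma card_filter_lt (k n : ℕ) (hnk : n ≤ k) :
    ((univ : Finset (Fin k)).filter (fun i : Fin k => i.val < n)).card = n := by
  have : ((univ : Finset (Fin k)).filter (fun i : Fin k => i.val < n)).card
      = (univ : Finset (Fin n)).card := by
    apply Finset.card_bij' (fun (a : Fin k) ha => (⟨a.val, (mem_filter.mp ha).2⟩ : Fin n))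
      (fun (b : Fin n) _ => Fin.castLE hnk b)
    · intro a ha; exact mem_univ _
    · intro b hb; simp [Fin.castLE, b.isLt]
    · intro a ha; simp [Fin.castLE]
    · intro b hb; simp
  rw [this, Finset.card_univ, Fintype.card_fin]

/-- For `k` i.i.d. samples `v : Fin k → ℝ` from a distribution `q` on
a finite set `S ⊆ ℝ`, with `tb(v)` the uniformly-tie-broken argmax and `n ≤ k`:
`E[max_{i∈[n]} v_i  | tb(v) ∈ [n]] = E[max_{i∈[k]} v_i | tb(v) ∈ [n]]
  = E[max_{i∈[k]} v_i]`. -/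
theorem conditional_max_eq (k n : ℕ) (hn : 0 < n) (hnk : n ≤ k)
    (S : Finset ℝ) (hS : S.Nonempty)
    (q : ℝ → ℝ) (hq : ∀ x ∈ S, 0 ≤ q x) (hsum : ∑ x ∈ S, q x = 1) :
    (∑ v ∈ Fintype.piFinset (fun _ : Fin k => S),
          (∏ j, q (v j)) * tbFirst k n v *
            (((univ : Finset (Fin k)).filter (fun j : Fin k => j.val < n)).sup'
              (by refine ⟨⟨0, lt_of_lt_of_le hn hnk⟩, ?_⟩; simp [hn]) v)) /
        (∑ v ∈ Fintype.piFinset (fun _ : Fin k => S),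
          (∏ j, q (v j)) * tbFirst k n v)
      = (∑ v ∈ Fintype.piFinset (fun _ : Fin k => S),
            (∏ j, q (v j)) * tbFirst k n v *
              ((univ : Finset (Fin k)).sup'
                (by exact ⟨⟨0, lt_of_lt_of_le hn hnk⟩, mem_univ _⟩) v)) /
          (∑ v ∈ Fintype.piFinset (fun _ : Fin k => S),
            (∏ j, q (v j)) * tbFirst k n v)
    ∧ (∑ v ∈ Fintype.piFinset (fun _ : Fin k => S),
            (∏ j, q (v j)) * tbFirst k n v *
              ((univ : Finset (Fin k)).sup'
                (by exact ⟨⟨0, lt_of_lt_of_le hn hnk⟩, mem_univ _⟩) v)) /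
          (∑ v ∈ Fintype.piFinset (fun _ : Fin k => S),
            (∏ j, q (v j)) * tbFirst k n v)
        = ∑ v ∈ Fintype.piFinset (fun _ : Fin k => S),
            (∏ j, q (v j)) *
              ((univ : Finset (Fin k)).sup'
                (by exact ⟨⟨0, lt_of_lt_of_le hn hnk⟩, mem_univ _⟩) v) := by
  
  have hk : 0 < k := lt_of_lt_of_le hn hnk
  have hne : (univ : Finset (Fin k)).Nonempty := ⟨⟨0, hk⟩, mem_univ _⟩
  have hs : ((univ : Finset (Fin k)).filter (fun j : Fin k => j.val < n)).Nonempty :=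
    ⟨⟨0, hk⟩, by simp [hn]⟩
  have hk0 : (k : ℝ) ≠ 0 := by positivity
  have hn0 : (n : ℝ) ≠ 0 := by positivity
  -- abbreviations
  set pi := Fintype.piFinset (fun _ : Fin k => S) with hpi
  -- total mass is 1
  have hP1 : ∑ v ∈ pi, (∏ j, q (v j)) = 1 := by
    rw [hpi, ← Finset.prod_univ_sum]
    simp [hsum]
  -- symmetry of the global sup
  have hM : ∀ σ : Equiv.Perm (Fin k), ∀ v : Fin k → ℝ,
      (univ : Finset (Fin k)).sup' hne (v ∘ σ) = (univ : Finset (Fin k)).sup' hne v :=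
    fun σ v => sup'_comp_perm hne σ v
  have hcard := card_filter_lt k n hnk
  -- denominator: k * D = n
  have hDen : (k : ℝ) * ∑ v ∈ pi, (∏ j, q (v j)) * tbFirst k n v = n := by
    have h := sum_tb_mul hk S q (fun _ => (1:ℝ)) (fun _ _ => rfl)
      ((univ : Finset (Fin k)).filter (fun j : Fin k => j.val < n))
    simp only [mul_one, hcard] at h
    calc (k : ℝ) * ∑ v ∈ pi, (∏ j, q (v j)) * tbFirst k n v
        = (k : ℝ) * ∑ v ∈ pi, (∏ j, q (v j)) *
            (∑ i ∈ (univ : Finset (Fin k)).filter (fun j : Fin k => j.val < n), gfun i v)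
              * 1 := by
          simp only [mul_one, tbFirst_eq]
      _ = (n : ℝ) * ∑ v ∈ pi, (∏ j, q (v j)) := by simpa using h
      _ = n := by rw [hP1, mul_one]
  -- numerator: k * N = n * EM
  have hNum : (k : ℝ) * ∑ v ∈ pi, (∏ j, q (v j)) * tbFirst k n v *
        ((univ : Finset (Fin k)).sup' hne v)
      = (n : ℝ) * ∑ v ∈ pi, (∏ j, q (v j)) * ((univ : Finset (Fin k)).sup' hne v) := by
    have h := sum_tb_mul hk S q (fun v => (univ : Finset (Fin k)).sup' hne v) hM
      ((univ : Finset (Fin k)).filter (fun j : Fin k => j.val < n))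
    simp only [hcard] at h
    simpa only [tbFirst_eq] using h
  -- first equality: numerators agree termwise
  have h1 : (∑ v ∈ pi, (∏ j, q (v j)) * tbFirst k n v *
        (((univ : Finset (Fin k)).filter (fun j : Fin k => j.val < n)).sup' hs v))
      = ∑ v ∈ pi, (∏ j, q (v j)) * tbFirst k n v *
        ((univ : Finset (Fin k)).sup' hne v) := by
    apply Finset.sum_congr rfl
    intro v _
    rcases eq_or_ne (tbFirst k n v) 0 with h | h
    · rw [h]; ring
    · rw [tbFirst_eq] at h
      obtain ⟨i, hi, hgi⟩ := Finset.exists_ne_zero_of_sum_ne_zero h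
      have hmax : ∀ j, v j ≤ v i := by
        by_contra hc
        exact hgi (by simp [gfun, hc])
      have heq : (((univ : Finset (Fin k)).filter (fun j : Fin k => j.val < n)).sup' hs v)
          = (univ : Finset (Fin k)).sup' hne v := by
        apply le_antisymm
        · exact Finset.sup'_le _ _ fun j _ => Finset.le_sup' v (mem_univ j)
        · exact Finset.sup'_le _ _ fun j _ => le_trans (hmax j) (Finset.le_sup' v hi)
      rw [heq]
  -- second equality
  have hDenval : ∑ v ∈ pi, (∏ j, q (v j)) * tbFirst k n v = (n : ℝ) / k := by
    field_simp
    linarith [hDen]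
  have h2 : (∑ v ∈ pi, (∏ j, q (v j)) * tbFirst k n v *
        ((univ : Finset (Fin k)).sup' hne v)) /
      (∑ v ∈ pi, (∏ j, q (v j)) * tbFirst k n v)
      = ∑ v ∈ pi, (∏ j, q (v j)) * ((univ : Finset (Fin k)).sup' hne v) := by
    have hNumval : ∑ v ∈ pi, (∏ j, q (v j)) * tbFirst k n v *
          ((univ : Finset (Fin k)).sup' hne v)
        = (n : ℝ) * (∑ v ∈ pi, (∏ j, q (v j)) * ((univ : Finset (Fin k)).sup' hne v)) / k := by
      field_simp
      linarith [hNum]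
    rw [hNumval, hDenval]
    field_simp
  exact ⟨congrArg (· / (∑ v ∈ pi, (∏ j, q (v j)) * tbFirst k n v)) h1, h2⟩
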